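/- arXiv:2003.06345 — 2 statements merged into one kernel-verified Lean document; each statement's English description precedes it below -/
import Mathlib

section
/- For t > 0, j ∈ {1,…,n}, and any f : {−1,1}ⁿ → ℝ, the discrete derivative of the heat semigroup satisfies D_j P_t f(x) = (e^{2t}−1)^{−1/2} · E[δ_j(t) f(x₁ξ₁(t),…,xₙξₙ(t))], where δ_j(t) = (ξ_j(t) − e^{−t})/√(1−e^{−2t}). -/
open Real MeasureTheory Finset

noncomputable section

/-- Sign of a boolean: `true ↦ 1`, `false ↦ -1`. -/
def sgn (b : Bool) : ℝ := if b then 1 else -1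

/-- Flip the `j`-th coordinate of a point of the discrete cube `{-1,1}ⁿ`. -/
def flip' {n : ℕ} (j : Fin n) (x : Fin n → Bool) : Fin n → Bool :=
  Function.update x j (!(x j))

/-- Discrete partial derivative `D_j f(ε) = (f(ε) - f(ε^{(j)}))/2`. -/
def D {n : ℕ} (j : Fin n) (f : (Fin n → Bool) → ℝ) : (Fin n → Bool) → ℝ :=
  fun x => (f x - f (flip' j x)) / 2

/-- `D_j` as a linear map. -/
def DL (n : ℕ) (j : Fin n) : ((Fin n → Bool) → ℝ) →ₗ[ℝ] ((Fin n → Bool) → ℝ) where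
  toFun := D j
  map_add' f g := by funext x; simp [D]; ring
  map_smul' c f := by funext x; simp [D]; ring

/-- The discrete Laplacian `Δ = -∑ⱼ Dⱼ` as a continuous linear map. -/
def Lap (n : ℕ) : ((Fin n → Bool) → ℝ) →L[ℝ] ((Fin n → Bool) → ℝ) :=
  LinearMap.toContinuousLinearMap (-(∑ j : Fin n, DL n j))

/-- The heat semigroup `P_t = e^{tΔ}` on the discrete cube. -/
def P (n : ℕ) (t : ℝ) : ((Fin n → Bool) → ℝ) →L[ℝ] ((Fin n → Bool) → ℝ) :=
  NormedSpace.exp (t • Lap n)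

/-- The weight of the biased product measure: probability of `ξ(t) = ξ`. -/
def w (n : ℕ) (t : ℝ) (ξ : Fin n → Bool) : ℝ :=
  ∏ i : Fin n, (1 + Real.exp (-t) * sgn (ξ i)) / 2

/-- The standardized variable `δ_j(t) = (ξ_j(t) - e^{-t})/√(1-e^{-2t})`. -/
def del (t : ℝ) (b : Bool) : ℝ := (sgn b - Real.exp (-t)) / Real.sqrt (1 - Real.exp (-2 * t))

/-- Coordinatewise product of two points of the cube. -/
def cmul {n : ℕ} (x ξ : Fin n → Bool) : Fin n → Bool := fun i => x i == ξ i


/-! ### Auxiliary lemmas -/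


section ExpIdem
variable {A : Type*} [NormedRing A] [NormedAlgebra ℝ A] [CompleteSpace A]

lemma exp_smul_idem (c : ℝ) (D : A) (hD : D * D = D) :
    NormedSpace.exp (c • D) = 1 + (Real.exp c - 1) • D := by
  have hpow : ∀ k : ℕ, (c • D) ^ (k + 1) = (c ^ (k + 1)) • D := by
    intro k
    induction k with
    | zero => simp
    | succ k ih =>
      rw [pow_succ, ih, smul_mul_assoc, mul_smul_comm, hD, smul_smul, ← pow_succ]
  have hsum : Summable (fun k : ℕ => ((k.factorial : ℝ))⁻¹ • (c • D) ^ k) :=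
    NormedSpace.expSeries_summable' (𝕂 := ℝ) (c • D)
  rw [NormedSpace.exp_eq_tsum ℝ]
  show (∑' n : ℕ, ((n.factorial : ℝ))⁻¹ • (c • D) ^ n) = _
  rw [Summable.tsum_eq_zero_add hsum]
  have h1 : (fun k : ℕ => (((k+1).factorial : ℝ))⁻¹ • (c • D) ^ (k + 1)) =
      fun k : ℕ => (c ^ (k + 1) / ((k+1).factorial : ℝ)) • D := by
    funext k
    rw [hpow, smul_smul, div_eq_inv_mul]
  have hsc : Summable (fun k : ℕ => c ^ (k + 1) / ((k+1).factorial : ℝ)) :=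
    (Real.summable_pow_div_factorial c).comp_injective Nat.succ_injective
  have h2 : Real.exp c = 1 + ∑' k : ℕ, c ^ (k + 1) / ((k+1).factorial : ℝ) := by
    rw [Real.exp_eq_exp_ℝ, NormedSpace.exp_eq_tsum_div]
    show (∑' n : ℕ, c ^ n / (n.factorial : ℝ)) = _
    rw [Summable.tsum_eq_zero_add (Real.summable_pow_div_factorial c)]
    simp
  rw [h1, Summable.tsum_smul_const hsc, h2]
  simp

end ExpIdem

section Cube

variable {n : ℕ}

lemma flip'_apply_self (j : Fin n) (x : Fin n → Bool) : flip' j x j = !(x j) := by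
  simp [flip']

lemma flip'_apply_ne {i j : Fin n} (h : i ≠ j) (x : Fin n → Bool) : flip' j x i = x i := by
  simp [flip', Function.update_of_ne h]

lemma flip'_flip' (j : Fin n) (x : Fin n → Bool) : flip' j (flip' j x) = x := by
  funext i
  by_cases h : i = j
  · subst h; simp [flip']
  · simp [flip'_apply_ne h]

lemma flip'_comm (i j : Fin n) (x : Fin n → Bool) :
    flip' i (flip' j x) = flip' j (flip' i x) := by
  by_cases hij : i = j
  · subst hij; rfl
  · simp only [flip']
    rw [Function.update_of_ne hij, Function.update_of_ne (Ne.symm hij),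
      Function.update_comm (Ne.symm hij)]

/-- `D j` as a continuous linear map. -/
def Dc (n : ℕ) (j : Fin n) : ((Fin n → Bool) → ℝ) →L[ℝ] ((Fin n → Bool) → ℝ) :=
  LinearMap.toContinuousLinearMap (DL n j)

lemma Dc_apply (j : Fin n) (f : (Fin n → Bool) → ℝ) (x : Fin n → Bool) :
    Dc n j f x = (f x - f (flip' j x)) / 2 := rfl

lemma Dc_idem (j : Fin n) : Dc n j * Dc n j = Dc n j := by
  ext f x
  simp only [ContinuousLinearMap.mul_apply, Dc_apply, flip'_flip']
  ring

lemma Dc_comm (i j : Fin n) : Commute (Dc n i) (Dc n j) := by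
  ext f x
  simp only [ContinuousLinearMap.mul_apply, Dc_apply, flip'_comm]
  ring

lemma smul_Lap (t : ℝ) : t • Lap n = ∑ j : Fin n, (-t) • Dc n j := by
  ext f x
  simp only [ContinuousLinearMap.smul_apply, ContinuousLinearMap.sum_apply, Lap, Dc,
    LinearMap.coe_toContinuousLinearMap', LinearMap.neg_apply, LinearMap.coe_sum,
    Finset.sum_apply, Pi.smul_apply, Pi.neg_apply, smul_eq_mul, Finset.sum_apply]
  rw [mul_neg, Finset.mul_sum, ← Finset.sum_neg_distrib]
  exact Finset.sum_congr rfl fun j _ => (neg_mul t _).symm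

/-- Coefficient used in the induction. -/
def coef (t : ℝ) (s : Finset (Fin n)) (i : Fin n) (b : Bool) : ℝ :=
  if i ∈ s then (1 + Real.exp (-t) * sgn b) / 2 else (if b then 1 else 0)

lemma cmul_flip' (a : Fin n) (x ξ : Fin n → Bool) :
    cmul (flip' a x) ξ = cmul x (flip' a ξ) := by
  funext i
  by_cases h : i = a
  · subst h
    simp only [cmul, flip'_apply_self]
    cases x i <;> cases ξ i <;> rfl
  · simp [cmul, flip'_apply_ne h]

lemma exp_sum_repr (t : ℝ) (s : Finset (Fin n)) (f : (Fin n → Bool) → ℝ) (x : Fin n → Bool) :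
    NormedSpace.exp (∑ j ∈ s, (-t) • Dc n j) f x =
      ∑ ξ : Fin n → Bool, (∏ i : Fin n, coef t s i (ξ i)) * f (cmul x ξ) := by
  classical
  induction s using Finset.cons_induction generalizing f x with
  | empty =>
    rw [Finset.sum_empty, NormedSpace.exp_zero]
    have : ∀ ξ : Fin n → Bool, ξ ≠ (fun _ => true) →
        (∏ i : Fin n, coef t ∅ i (ξ i)) * f (cmul x ξ) = 0 := by
      intro ξ hξ
      have : ∃ i, ξ i = false := by
        by_contra hc
        push_neg at hc
        exact hξ (funext fun i => by simpa using hc i)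
      obtain ⟨i, hi⟩ := this
      rw [Finset.prod_eq_zero (Finset.mem_univ i) (by simp [coef, hi]), zero_mul]
    rw [Fintype.sum_eq_single (fun _ => true) this]
    have hx : cmul x (fun _ => true) = x := by funext i; simp [cmul]
    simp [coef, hx]
  | cons a s ha ih =>
    letI : NormedAlgebra ℚ (((Fin n → Bool) → ℝ) →L[ℝ] ((Fin n → Bool) → ℝ)) :=
      NormedAlgebra.restrictScalars ℚ ℝ _
    rw [Finset.sum_cons, NormedSpace.exp_add_of_commute, ContinuousLinearMap.mul_apply,
      exp_smul_idem (-t) (Dc n a) (Dc_idem a)]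
    · set g := NormedSpace.exp (∑ j ∈ s, (-t) • Dc n j) f with hg
      have key : ((1 : ((Fin n → Bool) → ℝ) →L[ℝ] ((Fin n → Bool) → ℝ))
          + (Real.exp (-t) - 1) • Dc n a) g x
          = (1 + Real.exp (-t)) / 2 * g x + (1 - Real.exp (-t)) / 2 * g (flip' a x) := by
        simp only [ContinuousLinearMap.add_apply, ContinuousLinearMap.one_apply,
          ContinuousLinearMap.smul_apply, Dc_apply, Pi.add_apply, Pi.smul_apply, smul_eq_mul]
        ring
      rw [key, hg, ih, ih]
      have hflip : (∑ ξ : Fin n → Bool, (∏ i : Fin n, coef t s i (ξ i)) * f (cmul (flip' a x) ξ))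
          = ∑ ξ : Fin n → Bool, (∏ i : Fin n, coef t s i ((flip' a ξ) i)) * f (cmul x ξ) := by
        have hinv : Function.Involutive (flip' a) := flip'_flip' a
        rw [← Equiv.sum_comp hinv.toPerm]
        refine Finset.sum_congr rfl fun ξ _ => ?_
        simp only [Function.Involutive.coe_toPerm]
        rw [cmul_flip', flip'_flip']
      rw [hflip, Finset.mul_sum, Finset.mul_sum, ← Finset.sum_add_distrib]
      refine Finset.sum_congr rfl fun ξ _ => ?_
      have hsplit : ∀ h : Fin n → ℝ, (∏ i : Fin n, h i) = h a * ∏ i ∈ Finset.univ.erase a, h i :=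
        fun h => (Finset.mul_prod_erase Finset.univ h (Finset.mem_univ a)).symm
      rw [hsplit (fun i => coef t (Finset.cons a s ha) i (ξ i)),
        hsplit (fun i => coef t s i (ξ i)),
        hsplit (fun i => coef t s i ((flip' a ξ) i))]
      have he1 : (∏ i ∈ Finset.univ.erase a, coef t s i ((flip' a ξ) i))
          = ∏ i ∈ Finset.univ.erase a, coef t s i (ξ i) := by
        refine Finset.prod_congr rfl fun i hi => ?_
        rw [flip'_apply_ne (Finset.ne_of_mem_erase hi)]
      have he2 : (∏ i ∈ Finset.univ.erase a, coef t (Finset.cons a s ha) i (ξ i))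
          = ∏ i ∈ Finset.univ.erase a, coef t s i (ξ i) := by
        refine Finset.prod_congr rfl fun i hi => ?_
        simp [coef, Finset.mem_cons, Finset.ne_of_mem_erase hi]
      rw [he1, he2]
      have hca : coef t (Finset.cons a s ha) a (ξ a) = (1 + Real.exp (-t) * sgn (ξ a)) / 2 := by
        simp [coef]
      have hcs : coef t s a (ξ a) = if ξ a then 1 else 0 := by simp [coef, ha]
      have hcs' : coef t s a ((flip' a ξ) a) = if ξ a then 0 else 1 := by
        rw [flip'_apply_self]; cases hb : ξ a <;> simp [coef, ha, hb]
      rw [hca, hcs, hcs']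
      cases hb : ξ a <;> simp [sgn] <;> ring
    · exact Commute.sum_right _ _ _ fun j _ =>
        ((Dc_comm a j).smul_left (-t)).smul_right (-t)

lemma P_repr (t : ℝ) (f : (Fin n → Bool) → ℝ) (x : Fin n → Bool) :
    P n t f x = ∑ ξ : Fin n → Bool, w n t ξ * f (cmul x ξ) := by
  rw [P, smul_Lap, exp_sum_repr]
  refine Finset.sum_congr rfl fun ξ _ => ?_
  congr 1
  exact Finset.prod_congr rfl fun i _ => by simp [coef, w]

end Cube

lemma scalar_key (t : ℝ) (ht : 0 < t) (b : Bool) :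
    ((1 + Real.exp (-t) * sgn b) / 2 - (1 + Real.exp (-t) * sgn (!b)) / 2) / 2
      = (Real.sqrt (Real.exp (2*t) - 1))⁻¹ * ((1 + Real.exp (-t) * sgn b) / 2 * del t b) := by
  have hE1 : 1 < Real.exp (2*t) := Real.one_lt_exp_iff.mpr (by linarith)
  have hX : 0 < Real.exp (2*t) - 1 := by linarith
  set S := Real.sqrt (Real.exp (2*t) - 1) with hSdef
  have hS : 0 < S := Real.sqrt_pos.mpr hX
  have hS2 : S ^ 2 = Real.exp (2*t) - 1 := Real.sq_sqrt hX.le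
  have h1 : Real.exp (-t) ^ 2 = Real.exp (-2*t) := by
    rw [← Real.exp_nat_mul]; norm_num
  have h2 : Real.exp (-2*t) * Real.exp (2*t) = 1 := by
    rw [← Real.exp_add]; norm_num
  have hfac : 1 - Real.exp (-2*t) = (Real.exp (-t)) ^ 2 * (Real.exp (2*t) - 1) := by
    linear_combination (1 - Real.exp (2*t)) * h1 - h2
  have hsq : Real.sqrt (1 - Real.exp (-2*t)) = Real.exp (-t) * S := by
    rw [hfac, Real.sqrt_mul (sq_nonneg _), Real.sqrt_sq (Real.exp_pos _).le, hSdef]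
  have hu : 0 < Real.exp (-t) := Real.exp_pos _
  cases b
  · simp only [del, hsq, sgn, Bool.not_false, Bool.false_eq_true, if_true, if_false]
    field_simp
    nlinarith [hS2, hS, hu, h1, h2]
  · simp only [del, hsq, sgn, Bool.not_true, Bool.false_eq_true, if_true, if_false]
    field_simp
    nlinarith [hS2, hS, hu, h1, h2]

/-- gradient of the heat semigroup. -/
theorem stmt2 (n : ℕ) (t : ℝ) (ht : 0 < t) (j : Fin n) (f : (Fin n → Bool) → ℝ)
    (x : Fin n → Bool) :
    D j (P n t f) x =
      (Real.sqrt (Real.exp (2*t) - 1))⁻¹ *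
        ∑ ξ : Fin n → Bool, w n t ξ * (del t (ξ j) * f (cmul x ξ)) := by
  simp only [D]
  rw [P_repr, P_repr]
  have hflip : (∑ ξ : Fin n → Bool, w n t ξ * f (cmul (flip' j x) ξ))
      = ∑ ξ : Fin n → Bool, w n t (flip' j ξ) * f (cmul x ξ) := by
    have hinv : Function.Involutive (flip' j) := flip'_flip' j
    rw [← Equiv.sum_comp hinv.toPerm]
    refine Finset.sum_congr rfl fun ξ _ => ?_
    simp only [Function.Involutive.coe_toPerm]
    rw [cmul_flip', flip'_flip']
  rw [hflip, ← Finset.sum_sub_distrib, Finset.sum_div, Finset.mul_sum]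
  refine Finset.sum_congr rfl fun ξ _ => ?_
  have hsplit : ∀ h : Fin n → ℝ, (∏ i : Fin n, h i) = h j * ∏ i ∈ Finset.univ.erase j, h i :=
    fun h => (Finset.mul_prod_erase Finset.univ h (Finset.mem_univ j)).symm
  have hw1 : w n t ξ = (1 + Real.exp (-t) * sgn (ξ j)) / 2 *
      ∏ i ∈ Finset.univ.erase j, (1 + Real.exp (-t) * sgn (ξ i)) / 2 := by
    rw [w]; exact hsplit _
  have hw2 : w n t (flip' j ξ) = (1 + Real.exp (-t) * sgn (!(ξ j))) / 2 *
      ∏ i ∈ Finset.univ.erase j, (1 + Real.exp (-t) * sgn (ξ i)) / 2 := by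
    rw [w, hsplit (fun i => (1 + Real.exp (-t) * sgn ((flip' j ξ) i)) / 2), flip'_apply_self]
    congr 1
    exact Finset.prod_congr rfl fun i hi => by
      rw [flip'_apply_ne (Finset.ne_of_mem_erase hi)]
  have key := scalar_key t ht (ξ j)
  rw [hw1, hw2]
  set Q := ∏ i ∈ Finset.univ.erase j, (1 + Real.exp (-t) * sgn (ξ i)) / 2
  calc ((1 + Real.exp (-t) * sgn (ξ j)) / 2 * Q * f (cmul x ξ)
        - (1 + Real.exp (-t) * sgn (!(ξ j))) / 2 * Q * f (cmul x ξ)) / 2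
      = (((1 + Real.exp (-t) * sgn (ξ j)) / 2 - (1 + Real.exp (-t) * sgn (!(ξ j))) / 2) / 2)
          * (Q * f (cmul x ξ)) := by ring
    _ = _ := by rw [key]; ring

end
end

section
/- If a normed space X has Rademacher type p with constant C (i.e., E‖Σⱼ ε_j x_j‖ᵖ ≤ Cᵖ Σⱼ ‖x_j‖ᵖ for all finite sequences), then X has Enflo type p with constant at most (π/√2)·C: for every n and every f : {−1,1}ⁿ → X, E‖(f(ε) − f(−ε))/2‖ᵖ ≤ ((π/√2)C)ᵖ Σⱼ E‖D_j f(ε)‖ᵖ. -/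
open Real MeasureTheory Finset

noncomputable section

namespace S13

lemma sgn_not (b : Bool) : sgn (!b) = - sgn b := by cases b <;> simp [sgn]

def ww (s : ℝ) (b : Bool) : ℝ := (1 + s * sgn b) / 2

lemma ww_nonneg {s : ℝ} (h0 : 0 ≤ s) (h1 : s ≤ 1) (b : Bool) : 0 ≤ ww s b := by
  cases b <;> simp [ww, sgn] <;> nlinarith

lemma ww_add (s : ℝ) : ww s true + ww s false = 1 := by simp [ww, sgn]; ring

variable {n : ℕ}

def Wt (s : ℝ) (ξ : Fin n → Bool) : ℝ := ∏ i, ww s (ξ i)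

def Wd (s : ℝ) (ξ : Fin n → Bool) : ℝ :=
  ∑ j, (∏ i ∈ univ.erase j, ww s (ξ i)) * (sgn (ξ j) / 2)

lemma Wt_nonneg {s : ℝ} (h0 : 0 ≤ s) (h1 : s ≤ 1) (ξ : Fin n → Bool) : 0 ≤ Wt s ξ :=
  Finset.prod_nonneg fun _ _ => ww_nonneg h0 h1 _

lemma sum_prod_pi (h : Fin n → Bool → ℝ) :
    ∑ ξ : Fin n → Bool, ∏ i, h i (ξ i) = ∏ i, (h i true + h i false) := by
  have := Finset.prod_univ_sum (fun _ : Fin n => (univ : Finset Bool)) h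
  rw [Fintype.piFinset_univ] at this
  rw [← this]
  exact Finset.prod_congr rfl fun i _ => by simp

lemma sum_Wt (s : ℝ) : ∑ ξ : Fin n → Bool, Wt s ξ = 1 := by
  have := sum_prod_pi (n := n) (fun _ b => ww s b)
  simp only [Wt]
  rw [this]
  simp [ww_add]

lemma sum_Wt_mul (s : ℝ) (j : Fin n) (g : Bool → ℝ) :
    ∑ ξ : Fin n → Bool, Wt s ξ * g (ξ j) = ww s true * g true + ww s false * g false := by
  have h1 : ∀ ξ : Fin n → Bool, Wt s ξ * g (ξ j)
      = ∏ i, (if i = j then ww s (ξ i) * g (ξ i) else ww s (ξ i)) := by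
    intro ξ
    rw [Wt, ← Finset.mul_prod_erase univ (fun i => ww s (ξ i)) (mem_univ j),
        ← Finset.mul_prod_erase univ _ (mem_univ j)]
    rw [if_pos rfl]
    rw [Finset.prod_congr rfl (fun i hi => if_neg (Finset.mem_erase.mp hi).1)]
    ring
  simp_rw [h1]
  rw [sum_prod_pi (fun i b => if i = j then ww s b * g b else ww s b)]
  rw [Finset.prod_eq_single j (fun i _ hij => by rw [if_neg hij, if_neg hij, ww_add])
    (fun h => absurd (mem_univ j) h)]
  rw [if_pos rfl, if_pos rfl]

lemma sum_Wt_mean_zero (s : ℝ) (j : Fin n) :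
    ∑ ξ : Fin n → Bool, Wt s ξ * (sgn (ξ j) - s) = 0 := by
  rw [sum_Wt_mul s j (fun b => sgn b - s)]
  simp [ww, sgn]; ring

lemma cmul_self_left (ε ξ : Fin n → Bool) : cmul ε (cmul ε ξ) = ξ := by
  funext i; simp only [cmul]; cases ε i <;> cases ξ i <;> rfl

lemma cmul_self_right (ε ξ : Fin n → Bool) : cmul (cmul ε ξ) ξ = ε := by
  funext i; simp only [cmul]; cases ε i <;> cases ξ i <;> rfl

lemma cmul_true (ε : Fin n → Bool) : cmul ε (fun _ => true) = ε := by
  funext i; simp only [cmul]; cases ε i <;> rfl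

lemma flip'_flip' (j : Fin n) (x : Fin n → Bool) : flip' j (flip' j x) = x := by
  funext i
  by_cases h : i = j
  · subst h; simp [flip']
  · simp [flip', Function.update_of_ne h]

lemma flip'_apply_ne (j i : Fin n) (h : i ≠ j) (x : Fin n → Bool) : flip' j x i = x i :=
  Function.update_of_ne h _ _

lemma flip'_apply (j : Fin n) (x : Fin n → Bool) : flip' j x j = !(x j) := by
  simp [flip']

lemma cmul_flip' (j : Fin n) (ε ξ : Fin n → Bool) :
    cmul ε (flip' j ξ) = flip' j (cmul ε ξ) := by
  funext i
  by_cases h : i = j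
  · subst h
    simp only [cmul, flip'_apply, flip', Function.update_self]
    cases ε i <;> cases ξ i <;> rfl
  · simp only [cmul, flip'_apply_ne j i h]

def negE : (Fin n → Bool) ≃ (Fin n → Bool) :=
  Function.Involutive.toPerm (fun x i => !(x i)) (fun x => by funext i; simp)

def flipE (j : Fin n) : (Fin n → Bool) ≃ (Fin n → Bool) :=
  Function.Involutive.toPerm (flip' j) (flip'_flip' j)

def cmulE (ξ : Fin n → Bool) : (Fin n → Bool) ≃ (Fin n → Bool) :=
  Function.Involutive.toPerm (fun ε => cmul ε ξ) (fun ε => cmul_self_right ε ξ)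

def cmulLE (ε : Fin n → Bool) : (Fin n → Bool) ≃ (Fin n → Bool) :=
  Function.Involutive.toPerm (fun ξ => cmul ε ξ) (cmul_self_left ε)


variable {X : Type*} [NormedAddCommGroup X] [NormedSpace ℝ X]

lemma jensen_norm {p : ℝ} (hp1 : 1 ≤ p) {ι : Type*} [Fintype ι]
    (w : ι → ℝ) (a : ι → X) (hw : ∀ i, 0 ≤ w i) (h1 : ∑ i, w i = 1) :
    ‖∑ i, w i • a i‖ ^ p ≤ ∑ i, w i * ‖a i‖ ^ p := by
  have h0 : ‖∑ i, w i • a i‖ ≤ ∑ i, w i * ‖a i‖ := by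
    refine (norm_sum_le _ _).trans (Finset.sum_le_sum fun i _ => ?_)
    rw [norm_smul, Real.norm_eq_abs, abs_of_nonneg (hw i)]
  calc ‖∑ i, w i • a i‖ ^ p ≤ (∑ i, w i * ‖a i‖) ^ p :=
        Real.rpow_le_rpow (norm_nonneg _) h0 (by linarith)
    _ ≤ _ := Real.rpow_arith_mean_le_arith_mean_rpow univ w (fun i => ‖a i‖)
        (fun i _ => hw i) h1 (fun i _ => norm_nonneg _) hp1

def Df (f : (Fin n → Bool) → X) (j : Fin n) (y : Fin n → Bool) : X :=
  (2:ℝ)⁻¹ • (f y - f (flip' j y))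

def Pf (f : (Fin n → Bool) → X) (s : ℝ) (ε : Fin n → Bool) : X :=
  ∑ ξ, Wd s ξ • f (cmul ε ξ)

lemma sum_v_Df (f : (Fin n → Bool) → X) (s : ℝ) (j : Fin n) (ε : Fin n → Bool) :
    ∑ ξ : Fin n → Bool, ((∏ i ∈ univ.erase j, ww s (ξ i)) * (sgn (ξ j) / 2)) • f (cmul ε ξ)
      = ∑ ξ : Fin n → Bool,
        ((∏ i ∈ univ.erase j, ww s (ξ i)) * (sgn (ξ j) / 2)) • Df f j (cmul ε ξ) := by
  set v : (Fin n → Bool) → ℝ := fun ξ => (∏ i ∈ univ.erase j, ww s (ξ i)) * (sgn (ξ j) / 2)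
    with hv
  set A : (Fin n → Bool) → X := fun y => (2:ℝ)⁻¹ • (f y + f (flip' j y)) with hA
  have hfA : ∀ y, f y = A y + Df f j y := by
    intro y; simp only [hA, Df]; module
  have hAflip : ∀ y, A (flip' j y) = A y := by
    intro y; simp only [hA, flip'_flip']; rw [add_comm]
  have hvflip : ∀ ξ, v (flip' j ξ) = - v ξ := by
    intro ξ
    simp only [hv]
    rw [Finset.prod_congr rfl (fun i hi =>
      congrArg (ww s) (flip'_apply_ne j i (Finset.mem_erase.mp hi).1 ξ)),
      flip'_apply, sgn_not]
    ring
  have hS : ∑ ξ : Fin n → Bool, v ξ • A (cmul ε ξ) = 0 := by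
    have h1 : (∑ ξ : Fin n → Bool, v ξ • A (cmul ε ξ))
        = - ∑ ξ : Fin n → Bool, v ξ • A (cmul ε ξ) := by
      calc (∑ ξ : Fin n → Bool, v ξ • A (cmul ε ξ))
          = ∑ ξ : Fin n → Bool, v (flip' j ξ) • A (cmul ε (flip' j ξ)) :=
            (Equiv.sum_comp (flipE j) (fun ξ => v ξ • A (cmul ε ξ))).symm
        _ = ∑ ξ : Fin n → Bool, -(v ξ • A (cmul ε ξ)) :=
            Finset.sum_congr rfl fun ξ _ => by rw [hvflip, cmul_flip', hAflip, neg_smul]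
        _ = - ∑ ξ : Fin n → Bool, v ξ • A (cmul ε ξ) := Finset.sum_neg_distrib _
    have h3 : (2:ℝ) • (∑ ξ : Fin n → Bool, v ξ • A (cmul ε ξ)) = 0 := by
      rw [two_smul]; nth_rewrite 2 [h1]; rw [add_neg_cancel]
    rcases smul_eq_zero.mp h3 with h | h
    · norm_num at h
    · exact h
  calc ∑ ξ : Fin n → Bool, v ξ • f (cmul ε ξ)
      = ∑ ξ : Fin n → Bool, (v ξ • A (cmul ε ξ) + v ξ • Df f j (cmul ε ξ)) := by
        refine Finset.sum_congr rfl fun ξ _ => ?_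
        rw [← smul_add, ← hfA]
    _ = ∑ ξ : Fin n → Bool, v ξ • Df f j (cmul ε ξ) := by
        rw [Finset.sum_add_distrib, hS, zero_add]

lemma Pf_eq (f : (Fin n → Bool) → X) {s : ℝ} (hs : (1:ℝ) - s^2 ≠ 0) (ε : Fin n → Bool) :
    Pf f s ε = ((1:ℝ) - s^2)⁻¹ •
      ∑ ξ : Fin n → Bool, Wt s ξ • (∑ j, (sgn (ξ j) - s) • Df f j (cmul ε ξ)) := by
  have hv : ∀ (ξ : Fin n → Bool) (j : Fin n),
      (∏ i ∈ univ.erase j, ww s (ξ i)) * (sgn (ξ j) / 2)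
        = ((1:ℝ) - s^2)⁻¹ * (Wt s ξ * (sgn (ξ j) - s)) := by
    intro ξ j
    have hWt : Wt s ξ = ww s (ξ j) * ∏ i ∈ univ.erase j, ww s (ξ i) :=
      (Finset.mul_prod_erase univ (fun i => ww s (ξ i)) (mem_univ j)).symm
    have hww : ww s (ξ j) * (sgn (ξ j) - s) = ((1:ℝ) - s^2) * (sgn (ξ j) / 2) := by
      cases h : ξ j <;> simp [ww, sgn] <;> ring
    have hkey : ((1:ℝ) - s^2) * ((∏ i ∈ univ.erase j, ww s (ξ i)) * (sgn (ξ j) / 2))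
        = Wt s ξ * (sgn (ξ j) - s) := by
      rw [hWt]; linear_combination (-(∏ i ∈ univ.erase j, ww s (ξ i))) * hww
    rw [← hkey, inv_mul_cancel_left₀ hs]
  calc Pf f s ε
      = ∑ ξ : Fin n → Bool, ∑ j,
          ((∏ i ∈ univ.erase j, ww s (ξ i)) * (sgn (ξ j) / 2)) • f (cmul ε ξ) := by
        refine Finset.sum_congr rfl fun ξ _ => ?_
        rw [Wd, Finset.sum_smul]
    _ = ∑ j, ∑ ξ : Fin n → Bool,
          ((∏ i ∈ univ.erase j, ww s (ξ i)) * (sgn (ξ j) / 2)) • f (cmul ε ξ) :=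
        Finset.sum_comm
    _ = ∑ j, ∑ ξ : Fin n → Bool,
          ((∏ i ∈ univ.erase j, ww s (ξ i)) * (sgn (ξ j) / 2)) • Df f j (cmul ε ξ) :=
        Finset.sum_congr rfl fun j _ => sum_v_Df f s j ε
    _ = ∑ j, ∑ ξ : Fin n → Bool,
          (((1:ℝ) - s^2)⁻¹ * (Wt s ξ * (sgn (ξ j) - s))) • Df f j (cmul ε ξ) := by
        refine Finset.sum_congr rfl fun j _ => Finset.sum_congr rfl fun ξ _ => ?_
        rw [hv]
    _ = _ := by
        conv_rhs => rw [Finset.smul_sum]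
        rw [Finset.sum_comm]
        refine Finset.sum_congr rfl fun ξ _ => ?_
        rw [smul_smul, Finset.smul_sum]
        refine Finset.sum_congr rfl fun j _ => ?_
        rw [smul_smul, mul_assoc]

def selE (e : Fin n → Bool) : ((Fin n → Bool) × (Fin n → Bool)) ≃ ((Fin n → Bool) × (Fin n → Bool)) :=
  Function.Involutive.toPerm
    (fun z => (fun i => if e i then z.1 i else z.2 i, fun i => if e i then z.2 i else z.1 i))
    (by intro z; apply Prod.ext <;> funext i <;> by_cases h : e i <;> simp [h])

lemma Wt_sel (s : ℝ) (e : Fin n → Bool) (z : (Fin n → Bool) × (Fin n → Bool)) :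
    Wt s (fun i => if e i then z.1 i else z.2 i) * Wt s (fun i => if e i then z.2 i else z.1 i)
      = Wt s z.1 * Wt s z.2 := by
  simp only [Wt, ← Finset.prod_mul_distrib]
  exact Finset.prod_congr rfl fun i _ => by by_cases h : e i <;> simp [h, mul_comm]

lemma signflip (p s : ℝ) (x : Fin n → X) (e : Fin n → Bool) :
    ∑ ξ : Fin n → Bool, ∑ ξ' : Fin n → Bool,
        Wt s ξ * (Wt s ξ' * ‖∑ j, (sgn (ξ j) - sgn (ξ' j)) • x j‖ ^ p)
      = ∑ ξ : Fin n → Bool, ∑ ξ' : Fin n → Bool,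
        Wt s ξ * (Wt s ξ' * ‖∑ j, sgn (e j) • ((sgn (ξ j) - sgn (ξ' j)) • x j)‖ ^ p) := by
  have hL : (∑ ξ : Fin n → Bool, ∑ ξ' : Fin n → Bool,
        Wt s ξ * (Wt s ξ' * ‖∑ j, (sgn (ξ j) - sgn (ξ' j)) • x j‖ ^ p))
      = ∑ z : (Fin n → Bool) × (Fin n → Bool),
        Wt s z.1 * (Wt s z.2 * ‖∑ j, (sgn (z.1 j) - sgn (z.2 j)) • x j‖ ^ p) :=
    (Fintype.sum_prod_type (fun z : (Fin n → Bool) × (Fin n → Bool) =>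
      Wt s z.1 * (Wt s z.2 * ‖∑ j, (sgn (z.1 j) - sgn (z.2 j)) • x j‖ ^ p))).symm
  have hR : (∑ ξ : Fin n → Bool, ∑ ξ' : Fin n → Bool,
        Wt s ξ * (Wt s ξ' * ‖∑ j, sgn (e j) • ((sgn (ξ j) - sgn (ξ' j)) • x j)‖ ^ p))
      = ∑ z : (Fin n → Bool) × (Fin n → Bool),
        Wt s z.1 * (Wt s z.2 * ‖∑ j, sgn (e j) • ((sgn (z.1 j) - sgn (z.2 j)) • x j)‖ ^ p) :=
    (Fintype.sum_prod_type (fun z : (Fin n → Bool) × (Fin n → Bool) =>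
      Wt s z.1 * (Wt s z.2 * ‖∑ j, sgn (e j) • ((sgn (z.1 j) - sgn (z.2 j)) • x j)‖ ^ p))).symm
  rw [hL, hR]
  refine ((Equiv.sum_comp (selE e)
    (fun z => Wt s z.1 * (Wt s z.2 * ‖∑ j, (sgn (z.1 j) - sgn (z.2 j)) • x j‖ ^ p))).symm).trans
    (Finset.sum_congr rfl fun z _ => ?_)
  have hsgn : ∀ j, sgn (if e j then z.1 j else z.2 j) - sgn (if e j then z.2 j else z.1 j)
      = sgn (e j) * (sgn (z.1 j) - sgn (z.2 j)) := by
    intro j; by_cases h : e j <;> simp [h, sgn] <;> ring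
  simp only [selE, Function.Involutive.toPerm, Equiv.coe_fn_mk]
  rw [← mul_assoc, Wt_sel, mul_assoc]
  congr 3
  exact congrArg _ (Finset.sum_congr rfl fun j _ => by rw [hsgn j, mul_smul])

lemma marg2 {p : ℝ} (hp : p ≠ 0) (s : ℝ) (j : Fin n) :
    ∑ ξ : Fin n → Bool, ∑ ξ' : Fin n → Bool,
        Wt s ξ * (Wt s ξ' * |sgn (ξ j) - sgn (ξ' j)| ^ p)
      = ((1 - s^2)/2) * 2 ^ p := by
  have hinner : ∀ b : Bool, ∑ ξ' : Fin n → Bool, Wt s ξ' * |sgn b - sgn (ξ' j)| ^ p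
      = ww s true * |sgn b - 1| ^ p + ww s false * |sgn b + 1| ^ p := by
    intro b
    have := sum_Wt_mul (n := n) s j (fun b' => |sgn b - sgn b'| ^ p)
    simpa [sgn] using this
  calc ∑ ξ : Fin n → Bool, ∑ ξ' : Fin n → Bool, Wt s ξ * (Wt s ξ' * |sgn (ξ j) - sgn (ξ' j)| ^ p)
      = ∑ ξ : Fin n → Bool, Wt s ξ *
          (ww s true * |sgn (ξ j) - 1| ^ p + ww s false * |sgn (ξ j) + 1| ^ p) := by
        refine Finset.sum_congr rfl fun ξ _ => ?_
        rw [← Finset.mul_sum, hinner]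
    _ = ww s true * (ww s true * |sgn true - 1| ^ p + ww s false * |sgn true + 1| ^ p)
        + ww s false * (ww s true * |sgn false - 1| ^ p + ww s false * |sgn false + 1| ^ p) :=
        sum_Wt_mul (n := n) s j
          (fun b => ww s true * |sgn b - 1| ^ p + ww s false * |sgn b + 1| ^ p)
    _ = ((1 - s^2)/2) * 2 ^ p := by
        simp only [sgn]
        norm_num
        rw [Real.zero_rpow hp]
        simp only [ww, sgn]
        norm_num
        ring

lemma hrepr (s : ℝ) (x : Fin n → X) (ξ : Fin n → Bool) :
    ∑ j, (sgn (ξ j) - s) • x j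
      = ∑ ξ' : Fin n → Bool, Wt s ξ' • ∑ j, (sgn (ξ j) - sgn (ξ' j)) • x j := by
  have hcoef : ∀ j, ∑ ξ' : Fin n → Bool, Wt s ξ' * (sgn (ξ j) - sgn (ξ' j)) = sgn (ξ j) - s := by
    intro j
    have h : ∀ ξ' : Fin n → Bool, Wt s ξ' * (sgn (ξ j) - sgn (ξ' j))
        = (sgn (ξ j) - s) * Wt s ξ' - Wt s ξ' * (sgn (ξ' j) - s) := fun ξ' => by ring
    rw [Finset.sum_congr rfl fun ξ' _ => h ξ', Finset.sum_sub_distrib, ← Finset.mul_sum,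
      sum_Wt, sum_Wt_mean_zero, mul_one, sub_zero]
  calc ∑ j, (sgn (ξ j) - s) • x j
      = ∑ j, (∑ ξ' : Fin n → Bool, Wt s ξ' * (sgn (ξ j) - sgn (ξ' j))) • x j := by
        refine Finset.sum_congr rfl fun j _ => ?_; rw [hcoef]
    _ = ∑ j, ∑ ξ' : Fin n → Bool, (Wt s ξ' * (sgn (ξ j) - sgn (ξ' j))) • x j := by
        refine Finset.sum_congr rfl fun j _ => ?_; rw [Finset.sum_smul]
    _ = ∑ ξ' : Fin n → Bool, ∑ j, (Wt s ξ' * (sgn (ξ j) - sgn (ξ' j))) • x j := Finset.sum_comm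
    _ = _ := by
        refine Finset.sum_congr rfl fun ξ' _ => ?_
        rw [Finset.smul_sum]
        exact Finset.sum_congr rfl fun j _ => (smul_smul _ _ _).symm

lemma signflipz (p s : ℝ) (x : Fin n → X) (e : Fin n → Bool) :
    ∑ z : (Fin n → Bool) × (Fin n → Bool),
        Wt s z.1 * (Wt s z.2 * ‖∑ j, (sgn (z.1 j) - sgn (z.2 j)) • x j‖ ^ p)
      = ∑ z : (Fin n → Bool) × (Fin n → Bool),
        Wt s z.1 * (Wt s z.2 * ‖∑ j, sgn (e j) • ((sgn (z.1 j) - sgn (z.2 j)) • x j)‖ ^ p) := by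
  refine ((Equiv.sum_comp (selE e)
    (fun z => Wt s z.1 * (Wt s z.2 * ‖∑ j, (sgn (z.1 j) - sgn (z.2 j)) • x j‖ ^ p))).symm).trans
    (Finset.sum_congr rfl fun z _ => ?_)
  have hsgn : ∀ j, sgn (if e j then z.1 j else z.2 j) - sgn (if e j then z.2 j else z.1 j)
      = sgn (e j) * (sgn (z.1 j) - sgn (z.2 j)) := by
    intro j; by_cases h : e j <;> simp [h, sgn] <;> ring
  simp only [selE, Function.Involutive.toPerm, Equiv.coe_fn_mk]
  rw [← mul_assoc, Wt_sel, mul_assoc]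
  congr 3
  exact congrArg _ (Finset.sum_congr rfl fun j _ => by rw [hsgn j, mul_smul])

lemma stepD {p C : ℝ} (hp1 : 1 ≤ p) (hC : 0 ≤ C)
    (hT : ∀ (m : ℕ) (x : Fin m → X),
      (∑ ε : Fin m → Bool, ‖∑ j : Fin m, sgn (ε j) • x j‖ ^ p) / 2^m ≤
        C ^ p * ∑ j : Fin m, ‖x j‖ ^ p)
    {s : ℝ} (hs0 : 0 ≤ s) (hs1 : s < 1) (x : Fin n → X) :
    ∑ z : (Fin n → Bool) × (Fin n → Bool),
        Wt s z.1 * (Wt s z.2 * ‖∑ j, (sgn (z.1 j) - sgn (z.2 j)) • x j‖ ^ p)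
      ≤ ((1 - s^2)/2 * 2 ^ p) * (C ^ p * ∑ j, ‖x j‖ ^ p) := by
  have hp0 : (0:ℝ) < p := lt_of_lt_of_le one_pos hp1
  have hWt0 : ∀ ξ : Fin n → Bool, 0 ≤ Wt s ξ := Wt_nonneg hs0 hs1.le
  have hcard : ((Fintype.card (Fin n → Bool)) : ℝ) = 2 ^ n := by
    simp [Fintype.card_fun]
  have hn2 : ∀ (z : (Fin n → Bool) × (Fin n → Bool)) (j : Fin n),
      ‖(sgn (z.1 j) - sgn (z.2 j)) • x j‖ ^ p
        = |sgn (z.1 j) - sgn (z.2 j)| ^ p * ‖x j‖ ^ p := by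
    intro z j
    rw [norm_smul, Real.norm_eq_abs, Real.mul_rpow (abs_nonneg _) (norm_nonneg _)]
  calc ∑ z : (Fin n → Bool) × (Fin n → Bool),
        Wt s z.1 * (Wt s z.2 * ‖∑ j, (sgn (z.1 j) - sgn (z.2 j)) • x j‖ ^ p)
      = ((2:ℝ)^n)⁻¹ * ∑ e : Fin n → Bool, ∑ z : (Fin n → Bool) × (Fin n → Bool),
          Wt s z.1 * (Wt s z.2 * ‖∑ j, sgn (e j) • ((sgn (z.1 j) - sgn (z.2 j)) • x j)‖ ^ p) := by
        rw [Finset.sum_congr rfl fun e _ => (signflipz p s x e).symm, Finset.sum_const,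
          nsmul_eq_mul, Finset.card_univ, hcard, ← mul_assoc, inv_mul_cancel₀ (by positivity),
          one_mul]
    _ = ∑ z : (Fin n → Bool) × (Fin n → Bool), Wt s z.1 * (Wt s z.2 *
          ((∑ e : Fin n → Bool,
            ‖∑ j, sgn (e j) • ((sgn (z.1 j) - sgn (z.2 j)) • x j)‖ ^ p) / 2^n)) := by
        rw [Finset.sum_comm, Finset.mul_sum]
        refine Finset.sum_congr rfl fun z _ => ?_
        rw [← Finset.mul_sum, ← Finset.mul_sum]
        ring
    _ ≤ ∑ z : (Fin n → Bool) × (Fin n → Bool), Wt s z.1 * (Wt s z.2 *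
          (C ^ p * ∑ j, ‖(sgn (z.1 j) - sgn (z.2 j)) • x j‖ ^ p)) := by
        refine Finset.sum_le_sum fun z _ => ?_
        refine mul_le_mul_of_nonneg_left (mul_le_mul_of_nonneg_left ?_ (hWt0 z.2)) (hWt0 z.1)
        exact hT n (fun j => (sgn (z.1 j) - sgn (z.2 j)) • x j)
    _ = C ^ p * ∑ j, (∑ z : (Fin n → Bool) × (Fin n → Bool),
          Wt s z.1 * (Wt s z.2 * |sgn (z.1 j) - sgn (z.2 j)| ^ p)) * ‖x j‖ ^ p := by
        simp only [hn2]
        calc ∑ z : (Fin n → Bool) × (Fin n → Bool), Wt s z.1 * (Wt s z.2 *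
              (C ^ p * ∑ j, |sgn (z.1 j) - sgn (z.2 j)| ^ p * ‖x j‖ ^ p))
            = ∑ z : (Fin n → Bool) × (Fin n → Bool), ∑ j,
              C ^ p * ((Wt s z.1 * (Wt s z.2 * |sgn (z.1 j) - sgn (z.2 j)| ^ p)) * ‖x j‖ ^ p) := by
              refine Finset.sum_congr rfl fun z _ => ?_
              rw [Finset.mul_sum, Finset.mul_sum, Finset.mul_sum]
              exact Finset.sum_congr rfl fun j _ => by ring
          _ = ∑ j, ∑ z : (Fin n → Bool) × (Fin n → Bool),
              C ^ p * ((Wt s z.1 * (Wt s z.2 * |sgn (z.1 j) - sgn (z.2 j)| ^ p)) * ‖x j‖ ^ p) :=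
              Finset.sum_comm
          _ = C ^ p * ∑ j, (∑ z : (Fin n → Bool) × (Fin n → Bool),
              Wt s z.1 * (Wt s z.2 * |sgn (z.1 j) - sgn (z.2 j)| ^ p)) * ‖x j‖ ^ p := by
              rw [Finset.mul_sum]
              refine Finset.sum_congr rfl fun j _ => ?_
              rw [Finset.sum_mul, Finset.mul_sum]
    _ = ((1 - s^2)/2 * 2 ^ p) * (C ^ p * ∑ j, ‖x j‖ ^ p) := by
        have hmz : ∀ j : Fin n, ∑ z : (Fin n → Bool) × (Fin n → Bool),
            Wt s z.1 * (Wt s z.2 * |sgn (z.1 j) - sgn (z.2 j)| ^ p) = ((1 - s^2)/2) * 2 ^ p := by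
          intro j
          rw [Fintype.sum_prod_type (f := fun z : (Fin n → Bool) × (Fin n → Bool) =>
            Wt s z.1 * (Wt s z.2 * |sgn (z.1 j) - sgn (z.2 j)| ^ p))]
          exact marg2 (ne_of_gt hp0) s j
        simp only [hmz]
        rw [Finset.mul_sum, Finset.mul_sum, Finset.mul_sum]
        refine Finset.sum_congr rfl fun j _ => by ring

lemma key {p C : ℝ} (hp1 : 1 ≤ p) (hC : 0 ≤ C)
    (hT : ∀ (m : ℕ) (x : Fin m → X),
      (∑ ε : Fin m → Bool, ‖∑ j : Fin m, sgn (ε j) • x j‖ ^ p) / 2^m ≤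
        C ^ p * ∑ j : Fin m, ‖x j‖ ^ p)
    (f : (Fin n → Bool) → X) {s : ℝ} (hs0 : 0 ≤ s) (hs1 : s < 1) :
    ∑ ε : Fin n → Bool, ‖Pf f s ε‖ ^ p ≤
      ((1 - s^2)⁻¹) ^ p * (((1 - s^2)/2 * 2 ^ p) *
        (C ^ p * ∑ j, ∑ η : Fin n → Bool, ‖Df f j η‖ ^ p)) := by
  have hu : (0:ℝ) < 1 - s^2 := by nlinarith
  have hWt0 : ∀ ξ : Fin n → Bool, 0 ≤ Wt s ξ := Wt_nonneg hs0 hs1.le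
  have hcpos : (0:ℝ) ≤ ((1 - s^2)⁻¹) ^ p := Real.rpow_nonneg (inv_nonneg.mpr hu.le) p
  calc ∑ ε : Fin n → Bool, ‖Pf f s ε‖ ^ p
      ≤ ∑ ε : Fin n → Bool, ((1 - s^2)⁻¹) ^ p *
          ∑ ξ : Fin n → Bool, Wt s ξ * ‖∑ j, (sgn (ξ j) - s) • Df f j (cmul ε ξ)‖ ^ p := by
        refine Finset.sum_le_sum fun ε _ => ?_
        rw [Pf_eq f hu.ne' ε, norm_smul, Real.norm_eq_abs, abs_of_nonneg (inv_nonneg.mpr hu.le),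
          Real.mul_rpow (inv_nonneg.mpr hu.le) (norm_nonneg _)]
        exact mul_le_mul_of_nonneg_left
          (jensen_norm hp1 (Wt s) _ hWt0 (sum_Wt s)) hcpos
    _ = ((1 - s^2)⁻¹) ^ p * ∑ η : Fin n → Bool, ∑ ξ : Fin n → Bool,
          Wt s ξ * ‖∑ j, (sgn (ξ j) - s) • Df f j η‖ ^ p := by
        rw [← Finset.mul_sum]
        congr 1
        calc ∑ ε : Fin n → Bool, ∑ ξ : Fin n → Bool,
              Wt s ξ * ‖∑ j, (sgn (ξ j) - s) • Df f j (cmul ε ξ)‖ ^ p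
            = ∑ ξ : Fin n → Bool, ∑ ε : Fin n → Bool,
              Wt s ξ * ‖∑ j, (sgn (ξ j) - s) • Df f j (cmul ε ξ)‖ ^ p := Finset.sum_comm
          _ = ∑ ξ : Fin n → Bool, ∑ η : Fin n → Bool,
              Wt s ξ * ‖∑ j, (sgn (ξ j) - s) • Df f j η‖ ^ p := by
              refine Finset.sum_congr rfl fun ξ _ => ?_
              exact Equiv.sum_comp (cmulE ξ)
                (fun η => Wt s ξ * ‖∑ j, (sgn (ξ j) - s) • Df f j η‖ ^ p)
          _ = ∑ η : Fin n → Bool, ∑ ξ : Fin n → Bool,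
              Wt s ξ * ‖∑ j, (sgn (ξ j) - s) • Df f j η‖ ^ p := Finset.sum_comm
    _ ≤ ((1 - s^2)⁻¹) ^ p * ∑ η : Fin n → Bool,
          ∑ z : (Fin n → Bool) × (Fin n → Bool), Wt s z.1 * (Wt s z.2 *
            ‖∑ j, (sgn (z.1 j) - sgn (z.2 j)) • Df f j η‖ ^ p) := by
        refine mul_le_mul_of_nonneg_left (Finset.sum_le_sum fun η _ => ?_) hcpos
        calc ∑ ξ : Fin n → Bool, Wt s ξ * ‖∑ j, (sgn (ξ j) - s) • Df f j η‖ ^ p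
            ≤ ∑ ξ : Fin n → Bool, Wt s ξ * ∑ ξ' : Fin n → Bool,
                Wt s ξ' * ‖∑ j, (sgn (ξ j) - sgn (ξ' j)) • Df f j η‖ ^ p := by
              refine Finset.sum_le_sum fun ξ _ => ?_
              refine mul_le_mul_of_nonneg_left ?_ (hWt0 ξ)
              rw [hrepr s (fun j => Df f j η) ξ]
              exact jensen_norm hp1 (Wt s) _ hWt0 (sum_Wt s)
          _ = ∑ z : (Fin n → Bool) × (Fin n → Bool), Wt s z.1 * (Wt s z.2 *
                ‖∑ j, (sgn (z.1 j) - sgn (z.2 j)) • Df f j η‖ ^ p) := by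
              rw [Fintype.sum_prod_type (f := fun z : (Fin n → Bool) × (Fin n → Bool) =>
                Wt s z.1 * (Wt s z.2 * ‖∑ j, (sgn (z.1 j) - sgn (z.2 j)) • Df f j η‖ ^ p))]
              exact Finset.sum_congr rfl fun ξ _ => Finset.mul_sum _ _ _
    _ ≤ ((1 - s^2)⁻¹) ^ p * ∑ η : Fin n → Bool,
          ((1 - s^2)/2 * 2 ^ p) * (C ^ p * ∑ j, ‖Df f j η‖ ^ p) := by
        refine mul_le_mul_of_nonneg_left (Finset.sum_le_sum fun η _ => ?_) hcpos
        exact stepD hp1 hC hT hs0 hs1 (fun j => Df f j η)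
    _ = ((1 - s^2)⁻¹) ^ p * (((1 - s^2)/2 * 2 ^ p) *
          (C ^ p * ∑ j, ∑ η : Fin n → Bool, ‖Df f j η‖ ^ p)) := by
        congr 1
        rw [← Finset.mul_sum]
        congr 1
        rw [← Finset.mul_sum]
        congr 1
        exact Finset.sum_comm

lemma cont_ww (b : Bool) : Continuous fun s : ℝ => ww s b := by
  unfold ww; fun_prop

lemma cont_Wd (ξ : Fin n → Bool) : Continuous fun s => Wd s ξ := by
  unfold Wd
  refine continuous_finset_sum _ fun j _ => ?_
  exact (continuous_finset_prod _ fun i _ => cont_ww (ξ i)).mul continuous_const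

lemma hasDerivAt_Wt (ξ : Fin n → Bool) (s : ℝ) :
    HasDerivAt (fun t => Wt t ξ) (Wd s ξ) s := by
  have h : ∀ i ∈ (univ : Finset (Fin n)), HasDerivAt (fun t => ww t (ξ i)) (sgn (ξ i) / 2) s := by
    intro i _
    have h2 : HasDerivAt (fun t : ℝ => (1 + t * sgn (ξ i)) / 2) (sgn (ξ i) / 2) s := by
      simpa using (((hasDerivAt_id s).mul_const (sgn (ξ i))).const_add 1).div_const 2
    exact h2
  have h3 := HasDerivAt.fun_finsetProd h
  simpa [Wt, Wd, smul_eq_mul] using h3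

lemma integral_Wd (ξ : Fin n → Bool) :
    ∫ s in (0:ℝ)..1, Wd s ξ = Wt 1 ξ - Wt 0 ξ :=
  intervalIntegral.integral_eq_sub_of_hasDerivAt (fun s _ => hasDerivAt_Wt ξ s)
    ((cont_Wd ξ).intervalIntegrable 0 1)

lemma Wt_one (ξ : Fin n → Bool) : Wt 1 ξ = if ξ = (fun _ => true) then 1 else 0 := by
  by_cases h : ξ = fun _ => true
  · rw [if_pos h, h]; simp [Wt, ww, sgn]
  · obtain ⟨i, hi⟩ : ∃ i, ξ i ≠ true := by
      by_contra hc; push_neg at hc; exact h (funext fun i => hc i)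
    rw [if_neg h]
    refine Finset.prod_eq_zero (mem_univ i) ?_
    have hfi : ξ i = false := by simpa using hi
    rw [hfi]; simp [ww, sgn]

lemma Wt_zero (ξ : Fin n → Bool) : Wt 0 ξ = ((2:ℝ)^n)⁻¹ := by
  have : ∀ b, ww 0 b = 2⁻¹ := by intro b; simp [ww]
  simp only [Wt, this, Finset.prod_const, Finset.card_univ, Fintype.card_fin]
  rw [inv_pow]

variable [CompleteSpace X]

lemma integral_Pf (f : (Fin n → Bool) → X) (ε : Fin n → Bool) :
    ∫ s in (0:ℝ)..1, Pf f s ε = f ε - ((2:ℝ)^n)⁻¹ • ∑ η : Fin n → Bool, f η := by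
  have h1 : ∫ s in (0:ℝ)..1, Pf f s ε
      = ∑ ξ : Fin n → Bool, (∫ s in (0:ℝ)..1, Wd s ξ) • f (cmul ε ξ) := by
    unfold Pf
    rw [intervalIntegral.integral_finset_sum (f := fun ξ s => Wd s ξ • f (cmul ε ξ)) (fun ξ _ =>
      (((cont_Wd ξ).smul continuous_const).intervalIntegrable 0 1 :
        IntervalIntegrable (fun s => Wd s ξ • f (cmul ε ξ)) volume 0 1))]
    exact Finset.sum_congr rfl fun ξ _ => intervalIntegral.integral_smul_const _ _
  rw [h1]
  have h2 : ∀ ξ : Fin n → Bool, (∫ s in (0:ℝ)..1, Wd s ξ) • f (cmul ε ξ)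
      = Wt 1 ξ • f (cmul ε ξ) - Wt 0 ξ • f (cmul ε ξ) := by
    intro ξ; rw [integral_Wd, sub_smul]
  rw [Finset.sum_congr rfl fun ξ _ => h2 ξ, Finset.sum_sub_distrib]
  have h3 : ∑ ξ : Fin n → Bool, Wt 1 ξ • f (cmul ε ξ) = f ε := by
    have : ∀ ξ : Fin n → Bool, Wt 1 ξ • f (cmul ε ξ)
        = if ξ = (fun _ => true) then f (cmul ε ξ) else 0 := by
      intro ξ; rw [Wt_one]; split_ifs <;> simp
    rw [Finset.sum_congr rfl fun ξ _ => this ξ, Finset.sum_ite_eq' univ (fun _ => true)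
      (fun ξ => f (cmul ε ξ))]
    simp [cmul_true]
  have h4 : ∑ ξ : Fin n → Bool, Wt 0 ξ • f (cmul ε ξ)
      = ((2:ℝ)^n)⁻¹ • ∑ η : Fin n → Bool, f η := by
    simp only [Wt_zero]
    rw [← Finset.smul_sum]
    congr 1
    exact Equiv.sum_comp (cmulLE ε) (fun η => f η)
  rw [h3, h4]

end S13


set_option maxHeartbeats 2000000 in
/-- Rademacher type p implies Enflo type p with constant (π/√2)·C. -/
theorem stmt13 (X : Type*) [NormedAddCommGroup X] [NormedSpace ℝ X] [CompleteSpace X]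
    (p C : ℝ) (hp1 : 1 ≤ p) (hp2 : p ≤ 2) (hC : 0 ≤ C)
    (hT : ∀ (m : ℕ) (x : Fin m → X),
      (∑ ε : Fin m → Bool, ‖∑ j : Fin m, sgn (ε j) • x j‖ ^ p) / 2^m ≤
        C ^ p * ∑ j : Fin m, ‖x j‖ ^ p) :
    ∀ (n : ℕ) (f : (Fin n → Bool) → X),
      (∑ ε : Fin n → Bool, ‖(2:ℝ)⁻¹ • (f ε - f (fun i => !(ε i)))‖ ^ p) / 2^n ≤
        ((π / Real.sqrt 2) * C) ^ p *
          ∑ j : Fin n, (∑ ε : Fin n → Bool, ‖(2:ℝ)⁻¹ • (f ε - f (flip' j ε))‖ ^ p) / 2^n := by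
  intro n f
  have hp0 : (0:ℝ) < p := lt_of_lt_of_le one_pos hp1
  have hpne : p ≠ 0 := ne_of_gt hp0
  set R : ℝ := ∑ j : Fin n, ∑ η : Fin n → Bool, ‖S13.Df f j η‖ ^ p with hRdef
  have hR0 : 0 ≤ R := Finset.sum_nonneg fun j _ => Finset.sum_nonneg fun η _ =>
    Real.rpow_nonneg (norm_nonneg _) p
  set Mp : ℝ := R ^ p⁻¹ with hMpdef
  have hMp0 : 0 ≤ Mp := Real.rpow_nonneg hR0 _
  have hMppow : Mp ^ p = R := Real.rpow_inv_rpow hR0 hpne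
  set q : ENNReal := ENNReal.ofReal p with hq
  haveI : Fact (1 ≤ q) := ⟨ENNReal.one_le_ofReal.mpr hp1⟩
  have hqt : q.toReal = p := ENNReal.toReal_ofReal (by linarith)
  have hqtpos : 0 < q.toReal := by rw [hqt]; exact hp0
  set E := PiLp q (fun _ : Fin n → Bool => X) with hE
  set e : E ≃L[ℝ] ((Fin n → Bool) → X) := PiLp.continuousLinearEquiv q ℝ _ with he
  have hnorm : ∀ g : (Fin n → Bool) → X,
      ‖(e.symm g : E)‖ = (∑ ε : Fin n → Bool, ‖g ε‖ ^ p) ^ (1/p) := by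
    intro g
    rw [PiLp.norm_eq_sum hqtpos, hqt]
    rfl
  have hnormpow : ∀ g : (Fin n → Bool) → X,
      ‖(e.symm g : E)‖ ^ p = ∑ ε : Fin n → Bool, ‖g ε‖ ^ p := by
    intro g
    rw [hnorm, one_div, Real.rpow_inv_rpow (Finset.sum_nonneg fun ε _ =>
      Real.rpow_nonneg (norm_nonneg _) p) hpne]
  set F : ℝ → E := fun s => e.symm (fun ε => S13.Pf f s ε) with hF
  -- pointwise bound on the norm of F
  have hFb : ∀ s ∈ Set.Ico (0:ℝ) 1,
      ‖F s‖ ≤ (Real.sqrt 2 * C * Mp) * (Real.sqrt (1 - s^2))⁻¹ := by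
    intro s hs
    have hu : (0:ℝ) < 1 - s^2 := by nlinarith [hs.1, hs.2]
    have hu1 : 1 - s^2 ≤ 1 := by nlinarith [hs.1]
    have hy0 : (0:ℝ) ≤ Real.sqrt 2 * C * Mp * (Real.sqrt (1 - s^2))⁻¹ := by positivity
    rw [← Real.rpow_le_rpow_iff (norm_nonneg _) hy0 hp0]
    rw [hnormpow]
    refine (S13.key hp1 hC hT f hs.1 hs.2).trans ?_
    -- scalar inequality
    have hexp : (Real.sqrt 2 * C * Mp * (Real.sqrt (1 - s^2))⁻¹) ^ p
        = 2 ^ (p/2) * (C ^ p * Mp ^ p) * ((1 - s^2) ^ (p/2))⁻¹ := by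
      have hs2 : (Real.sqrt 2 : ℝ) ^ p = 2 ^ (p/2) := by
        rw [Real.sqrt_eq_rpow, ← Real.rpow_mul (by norm_num : (0:ℝ) ≤ 2)]
        congr 1; ring
      have hsu : ((Real.sqrt (1 - s^2) : ℝ))⁻¹ ^ p = ((1 - s^2) ^ (p/2))⁻¹ := by
        rw [Real.inv_rpow (Real.sqrt_nonneg _), Real.sqrt_eq_rpow,
          ← Real.rpow_mul hu.le]
        congr 2; ring
      rw [Real.mul_rpow (by positivity) (by positivity),
          Real.mul_rpow (by positivity) hMp0,
          Real.mul_rpow (Real.sqrt_nonneg 2) hC, hs2, hsu]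
      ring
    rw [hexp, hMppow]
    have hup : (0:ℝ) < (1 - s^2) ^ (p/2) := Real.rpow_pos_of_pos hu _
    -- LHS = 2^(p-1) * (1-s²)^(1-p) * (C^p * R)
    have hL : ((1 - s^2)⁻¹) ^ p * (((1 - s^2)/2 * 2 ^ p) * (C ^ p * R))
        = (2 ^ (p-1) * (1 - s^2) ^ (1-p)) * (C ^ p * R) := by
      have h1 : ((1 - s^2 : ℝ)⁻¹) ^ p = ((1 - s^2) ^ p)⁻¹ := Real.inv_rpow hu.le p
      have h2 : (2:ℝ) ^ (p-1) = 2 ^ p / 2 := by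
        rw [Real.rpow_sub (by norm_num : (0:ℝ) < 2), Real.rpow_one]
      have h3 : (1 - s^2 : ℝ) ^ (1-p) = (1 - s^2) / (1 - s^2) ^ p := by
        rw [Real.rpow_sub hu, Real.rpow_one]
      have hne : ((1 - s^2 : ℝ) ^ p) ≠ 0 := (Real.rpow_pos_of_pos hu p).ne'
      rw [h1, h2, h3]
      field_simp
    rw [hL]
    have hR2 : (0:ℝ) ≤ C ^ p * R := mul_nonneg (Real.rpow_nonneg hC _) hR0
    have hsca : 2 ^ (p-1) * (1 - s^2) ^ (1-p) ≤ 2 ^ (p/2) * ((1 - s^2) ^ (p/2))⁻¹ := by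
      have h1 : (1 - s^2 : ℝ) ^ (1-p) = (1 - s^2) ^ (1 - p/2) * ((1 - s^2) ^ (p/2))⁻¹ := by
        rw [← Real.rpow_neg hu.le, ← Real.rpow_add hu]
        congr 1; ring
      rw [h1, ← mul_assoc]
      refine mul_le_mul_of_nonneg_right ?_ (inv_nonneg.mpr hup.le)
      have h2 : (2:ℝ) ^ (p-1) ≤ 2 ^ (p/2) :=
        (Real.rpow_le_rpow_left_iff one_lt_two).mpr (by linarith)
      have h3 : (1 - s^2 : ℝ) ^ (1 - p/2) ≤ 1 :=
        Real.rpow_le_one hu.le hu1 (by linarith)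
      calc (2:ℝ) ^ (p-1) * (1 - s^2) ^ (1 - p/2) ≤ 2 ^ (p/2) * 1 :=
            mul_le_mul h2 h3 (Real.rpow_nonneg hu.le _) (Real.rpow_nonneg (by norm_num) _)
        _ = 2 ^ (p/2) := mul_one _
    calc (2 ^ (p-1) * (1 - s^2) ^ (1-p)) * (C ^ p * R)
        ≤ (2 ^ (p/2) * ((1 - s^2) ^ (p/2))⁻¹) * (C ^ p * R) :=
          mul_le_mul_of_nonneg_right hsca hR2
      _ = 2 ^ (p/2) * (C ^ p * R) * ((1 - s^2) ^ (p/2))⁻¹ := by ring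
  -- continuity and integrability of F
  have hPfcont : ∀ ε : Fin n → Bool, Continuous fun s => S13.Pf f s ε := by
    intro ε
    unfold S13.Pf
    exact continuous_finset_sum _ fun ξ _ => (S13.cont_Wd ξ).smul continuous_const
  have hFcont : Continuous F :=
    e.symm.continuous.comp (continuous_pi fun ε => hPfcont ε)
  have hFint : IntervalIntegrable F volume 0 1 := hFcont.intervalIntegrable 0 1
  set mm : X := ((2:ℝ)^n)⁻¹ • ∑ η : Fin n → Bool, f η with hmm
  set g0 : (Fin n → Bool) → X := fun ε => f ε - mm with hg0
  haveI : CompleteSpace E := inferInstance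
  -- integral identity
  have hIF : (∫ s in (0:ℝ)..1, F s) = e.symm g0 := by
    apply e.injective
    rw [e.apply_symm_apply]
    have h := (e.toContinuousLinearMap).intervalIntegral_comp_comm hFint
    have h2 : (e : E →L[ℝ] ((Fin n → Bool) → X)) (∫ s in (0:ℝ)..1, F s)
        = ∫ s in (0:ℝ)..1, (fun ε => S13.Pf f s ε) := by
      rw [← h]
      refine intervalIntegral.integral_congr fun s _ => ?_
      show e (F s) = _
      rw [hF]
      exact e.apply_symm_apply _
    rw [show ((e : E ≃L[ℝ] ((Fin n → Bool) → X)) (∫ s in (0:ℝ)..1, F s))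
        = (e : E →L[ℝ] ((Fin n → Bool) → X)) (∫ s in (0:ℝ)..1, F s) from rfl, h2]
    have hGint : IntervalIntegrable (fun s => (fun ε => S13.Pf f s ε)) volume 0 1 :=
      ((continuous_pi fun ε => hPfcont ε).intervalIntegrable 0 1)
    funext ε
    have h3 := (ContinuousLinearMap.proj (R := ℝ) (φ := fun _ : Fin n → Bool => X)
      ε).intervalIntegral_comp_comm hGint
    have h4 : (∫ s in (0:ℝ)..1, (fun ε => S13.Pf f s ε)) ε
        = ∫ s in (0:ℝ)..1, S13.Pf f s ε := h3.symm
    rw [h4, S13.integral_Pf f ε]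
  -- Minkowski + integral bound
  have hmain : ‖(e.symm g0 : E)‖ ≤ (Real.sqrt 2 * C * Mp) * (π/2) := by
    rw [← hIF]
    refine (intervalIntegral.norm_integral_le_integral_norm zero_le_one).trans ?_
    set A : ℝ := Real.sqrt 2 * C * Mp with hA
    have hA0 : 0 ≤ A := by positivity
    have hnormcont : Continuous fun s => ‖F s‖ := hFcont.norm
    obtain ⟨x₀, hx₀mem, hx₀⟩ := isCompact_Icc.exists_isMaxOn
      (Set.nonempty_Icc.mpr zero_le_one) (hnormcont.continuousOn (s := Set.Icc (0:ℝ) 1))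
    set B : ℝ := ‖F x₀‖ with hB
    have hbound : ∀ r ∈ Set.Ico (0:ℝ) 1,
        (∫ s in (0:ℝ)..1, ‖F s‖) ≤ A*(π/2) + B*(1-r) := by
      intro r hr
      have hsplit : (∫ s in (0:ℝ)..1, ‖F s‖)
          = (∫ s in (0:ℝ)..r, ‖F s‖) + ∫ s in r..1, ‖F s‖ :=
        (intervalIntegral.integral_add_adjacent_intervals
          (hnormcont.intervalIntegrable 0 r) (hnormcont.intervalIntegrable r 1)).symm
      have hsqcont : Continuous fun x : ℝ => Real.sqrt (1 - x^2) :=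
        Real.continuous_sqrt.comp (continuous_const.sub (continuous_pow 2))
      have hsqne : ∀ x ∈ Set.Icc (0:ℝ) r, Real.sqrt (1 - x^2) ≠ 0 := by
        intro x hx
        have : (0:ℝ) < 1 - x^2 := by nlinarith [hx.1, hx.2, hr.2]
        exact (Real.sqrt_pos.mpr this).ne'
      have hiicc : Set.uIcc (0:ℝ) r = Set.Icc 0 r := Set.uIcc_of_le hr.1
      have hginv_cont : ContinuousOn (fun x : ℝ => (Real.sqrt (1 - x^2))⁻¹)
          (Set.uIcc 0 r) := by
        rw [hiicc]
        exact ContinuousOn.inv₀ hsqcont.continuousOn hsqne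
      have hgint : IntervalIntegrable (fun x : ℝ => (Real.sqrt (1 - x^2))⁻¹) volume 0 r :=
        hginv_cont.intervalIntegrable
      have hgint' : IntervalIntegrable (fun x : ℝ => A * (Real.sqrt (1 - x^2))⁻¹)
          volume 0 r := (continuousOn_const.mul hginv_cont).intervalIntegrable
      have h1 : (∫ s in (0:ℝ)..r, ‖F s‖) ≤ ∫ x in (0:ℝ)..r, A * (Real.sqrt (1 - x^2))⁻¹ := by
        refine intervalIntegral.integral_mono_on hr.1
          (hnormcont.intervalIntegrable 0 r) hgint' ?_
        intro x hx
        exact hFb x ⟨hx.1, lt_of_le_of_lt hx.2 hr.2⟩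
      have harc : (∫ x in (0:ℝ)..r, (Real.sqrt (1 - x^2))⁻¹) = Real.arcsin r := by
        have hderiv : ∀ x ∈ Set.uIcc (0:ℝ) r,
            HasDerivAt Real.arcsin ((Real.sqrt (1 - x^2))⁻¹) x := by
          intro x hx
          rw [hiicc] at hx
          have h1' : x ≠ -1 := by intro hcon; rw [hcon] at hx; exact absurd hx.1 (by norm_num)
          have h2' : x ≠ 1 := by
            intro hcon; rw [hcon] at hx
            exact absurd (hx.2.trans_lt hr.2) (by norm_num)
          have := Real.hasDerivAt_arcsin h1' h2'
          rwa [one_div] at this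
        rw [intervalIntegral.integral_eq_sub_of_hasDerivAt hderiv hgint, Real.arcsin_zero,
          sub_zero]
      have h1' : (∫ s in (0:ℝ)..r, ‖F s‖) ≤ A * (π/2) := by
        refine h1.trans ?_
        rw [intervalIntegral.integral_const_mul, harc]
        exact mul_le_mul_of_nonneg_left (Real.arcsin_le_pi_div_two r) hA0
      have h2 : (∫ s in r..1, ‖F s‖) ≤ B * (1-r) := by
        have hmono : (∫ s in r..1, ‖F s‖) ≤ ∫ _ in r..1, B := by
          refine intervalIntegral.integral_mono_on hr.2.le
            (hnormcont.intervalIntegrable r 1) intervalIntegrable_const ?_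
          intro x hx
          exact hx₀ ⟨le_trans hr.1 hx.1, hx.2⟩
        rwa [intervalIntegral.integral_const, smul_eq_mul, mul_comm] at hmono
      linarith [hsplit, h1', h2]
    have htend : Filter.Tendsto (fun r : ℝ => A*(π/2) + B*(1-r))
        (nhdsWithin 1 (Set.Iio 1)) (nhds (A*(π/2))) := by
      have hc : Continuous fun r : ℝ => A*(π/2) + B*(1-r) := by fun_prop
      have h5 := (hc.tendsto 1).mono_left (nhdsWithin_le_nhds (s := Set.Iio (1:ℝ)))
      simpa using h5
    refine ge_of_tendsto htend ?_
    filter_upwards [Ioo_mem_nhdsLT_of_mem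
      (Set.mem_Ioc.mpr ⟨zero_lt_one, le_refl (1:ℝ)⟩)] with r hr
    exact hbound r ⟨hr.1.le, hr.2⟩
  -- compare the odd part with g0
  set o : (Fin n → Bool) → X := fun ε => (2:ℝ)⁻¹ • (f ε - f (fun i => !(ε i))) with ho
  have hOnorm : ‖(e.symm o : E)‖ ≤ ‖(e.symm g0 : E)‖ := by
    set g0n : (Fin n → Bool) → X := fun ε => f (fun i => !(ε i)) - mm with hg0n
    have hdec : (e.symm o : E) = (2:ℝ)⁻¹ • ((e.symm g0 : E) - e.symm g0n) := by
      apply e.injective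
      rw [_root_.map_smul, map_sub, e.apply_symm_apply, e.apply_symm_apply, e.apply_symm_apply]
      funext ε
      simp only [Pi.smul_apply, Pi.sub_apply, ho, hg0, hg0n]
      congr 1
      abel
    have hsame : ‖(e.symm g0n : E)‖ = ‖(e.symm g0 : E)‖ := by
      rw [hnorm, hnorm]
      congr 1
      calc ∑ ε : Fin n → Bool, ‖g0n ε‖ ^ p
          = ∑ ε : Fin n → Bool, ‖g0 (S13.negE ε)‖ ^ p := by
            refine Finset.sum_congr rfl fun ε _ => ?_
            simp only [hg0n, hg0, S13.negE, Function.Involutive.toPerm, Equiv.coe_fn_mk]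
        _ = ∑ η : Fin n → Bool, ‖g0 η‖ ^ p := Equiv.sum_comp (S13.negE) (fun η => ‖g0 η‖ ^ p)
    rw [hdec, norm_smul]
    have : ‖((2:ℝ)⁻¹)‖ = (2:ℝ)⁻¹ := by rw [Real.norm_eq_abs, abs_of_nonneg (by norm_num)]
    rw [this]
    calc (2:ℝ)⁻¹ * ‖(e.symm g0 : E) - e.symm g0n‖
        ≤ (2:ℝ)⁻¹ * (‖(e.symm g0 : E)‖ + ‖(e.symm g0n : E)‖) :=
          mul_le_mul_of_nonneg_left (norm_sub_le _ _) (by norm_num)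
      _ = ‖(e.symm g0 : E)‖ := by rw [hsame]; ring
  -- final constant computation
  have hKpos : (0:ℝ) ≤ (π / Real.sqrt 2) * C :=
    mul_nonneg (div_nonneg Real.pi_pos.le (Real.sqrt_nonneg 2)) hC
  have hconst : (Real.sqrt 2 * C * Mp) * (π/2) = ((π / Real.sqrt 2) * C) * Mp := by
    have h2 : Real.sqrt 2 * Real.sqrt 2 = 2 := Real.mul_self_sqrt (by norm_num)
    have hne : Real.sqrt 2 ≠ 0 := by positivity
    have h3 : π / Real.sqrt 2 = Real.sqrt 2 * π / 2 := by
      rw [div_eq_div_iff hne (by norm_num)]; linear_combination (-π) * h2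
    rw [h3]; ring
  have hfin : ∑ ε : Fin n → Bool, ‖o ε‖ ^ p ≤ (((π / Real.sqrt 2) * C) * Mp) ^ p := by
    rw [← hnormpow o]
    rw [← hconst]
    refine Real.rpow_le_rpow (norm_nonneg _) ?_ hp0.le
    exact hOnorm.trans hmain
  -- conclude
  have hRHS : (((π / Real.sqrt 2) * C) * Mp) ^ p = ((π / Real.sqrt 2) * C) ^ p * R := by
    rw [Real.mul_rpow hKpos hMp0, hMppow]
  rw [show (∑ ε : Fin n → Bool, ‖(2:ℝ)⁻¹ • (f ε - f (fun i => !(ε i)))‖ ^ p)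
      = ∑ ε : Fin n → Bool, ‖o ε‖ ^ p from rfl]
  have hDfeq : ∀ j : Fin n, (∑ ε : Fin n → Bool, ‖(2:ℝ)⁻¹ • (f ε - f (flip' j ε))‖ ^ p)
      = ∑ ε : Fin n → Bool, ‖S13.Df f j ε‖ ^ p := fun j => rfl
  calc (∑ ε : Fin n → Bool, ‖o ε‖ ^ p) / 2^n
      ≤ (((π / Real.sqrt 2) * C) ^ p * R) / 2^n := by
        rw [← hRHS]; gcongr
    _ = ((π / Real.sqrt 2) * C) ^ p *
          ∑ j : Fin n, (∑ ε : Fin n → Bool, ‖(2:ℝ)⁻¹ • (f ε - f (flip' j ε))‖ ^ p) / 2^n := by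
        rw [← Finset.sum_div, ← mul_div_assoc, hRdef]
        rfl

end
end
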